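/- Let G be a group, H ≤ G a subgroup of finite index, and π_n : H → U(k(n)) a sequence of maps that is an approximate homomorphism (‖π_n(h₁h₂) − π_n(h₁)π_n(h₂)‖ → 0 for all h₁, h₂ ∈ H). Then the induced maps Ind π_n : G → U(N·k(n)) (defined via coset representatives g_1,...,g_N as for induced representations) form an approximate homomorphism of G, and ‖(Ind π_n)(gg') − (Ind π_n)(g)(Ind π_n)(g')‖ ≤ max over the relevant elements h', h ∈ H of ‖π_n(h')π_n(h) − π_n(h'h)‖. -/

import Mathlib

open Matrix Filter

/-- The operator norm on `n×n` complex matrices. -/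
noncomputable def opNorm {ι : Type*} [Fintype ι] [DecidableEq ι] (M : Matrix ι ι ℂ) : ℝ :=
  ‖Matrix.toEuclideanCLM (n := ι) (𝕜 := ℂ) M‖

/-- The induced (approximate) representation: given coset data `j, hf` with
`g·gᵢ = g_{j(g,i)}·hf(g,i)`, the operator `(Ind π)(g)` on `⊕ᵢ ℂᵏ` has block entry
`π(hf g i)` in block position `(j g i, i)` and `0` elsewhere. -/
noncomputable def IndRep {G : Type*} [Group G] {H : Subgroup G} (N km : ℕ)
    (π : H → Matrix (Fin km) (Fin km) ℂ)
    (j : G → Fin N → Fin N) (hf : G → Fin N → H) (g : G) :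
    Matrix (Fin N × Fin km) (Fin N × Fin km) ℂ :=
  Matrix.of fun p q => if p.1 = j g q.1 then π (hf g q.1) p.2 q.2 else 0

lemma opNorm_nonneg' {ι : Type*} [Fintype ι] [DecidableEq ι] (M : Matrix ι ι ℂ) :
    0 ≤ opNorm M := norm_nonneg _

lemma opNorm_sub_comm {ι : Type*} [Fintype ι] [DecidableEq ι] (A B : Matrix ι ι ℂ) :
    opNorm (A - B) = opNorm (B - A) := by
  unfold opNorm; rw [← norm_neg, ← map_neg, neg_sub]

lemma normsq {ι : Type*} [Fintype ι] (v : EuclideanSpace ℂ ι) : ‖v‖ ^ 2 = ∑ i, ‖v i‖ ^ 2 := by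
  rw [EuclideanSpace.norm_eq, Real.sq_sqrt]
  positivity

lemma block_opNorm_le {N km : ℕ} (σ : Fin N → Fin N) (hσ : Function.Injective σ)
    (B : Fin N → Matrix (Fin km) (Fin km) ℂ) (C : ℝ) (hC : 0 ≤ C)
    (hB : ∀ i, opNorm (B i) ≤ C) :
    opNorm (Matrix.of fun p q : Fin N × Fin km =>
      if p.1 = σ q.1 then B q.1 p.2 q.2 else 0) ≤ C := by
  set M : Matrix (Fin N × Fin km) (Fin N × Fin km) ℂ :=
    Matrix.of fun p q => if p.1 = σ q.1 then B q.1 p.2 q.2 else 0 with hM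
  have hbij : Function.Bijective σ := (Finite.injective_iff_bijective).mp hσ
  set e := Equiv.ofBijective σ hbij with he
  refine ContinuousLinearMap.opNorm_le_bound _ hC (fun x => ?_)
  set y : Fin N → EuclideanSpace ℂ (Fin km) := fun i => WithLp.toLp 2 (fun b => x (i, b)) with hy
  have happ : ∀ p : Fin N × Fin km,
      (Matrix.toEuclideanCLM (n := Fin N × Fin km) (𝕜 := ℂ) M x) p =
      (Matrix.toEuclideanCLM (n := Fin km) (𝕜 := ℂ) (B (e.symm p.1)) (y (e.symm p.1))) p.2 := by
    intro p
    show ∑ q, M p q * x q = ∑ b, B (e.symm p.1) p.2 b * y (e.symm p.1) b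
    rw [Fintype.sum_prod_type]
    rw [Finset.sum_eq_single (e.symm p.1)]
    rotate_left 2
    · intro h; exact absurd (Finset.mem_univ _) h
    · apply Finset.sum_congr rfl
      intro b _
      have hpe : p.1 = σ (e.symm p.1) := (e.apply_symm_apply p.1).symm
      simp only [hM, hy, Matrix.of_apply, if_pos hpe]
    · intro q₁ _ hq₁
      apply Finset.sum_eq_zero
      intro b _
      have hne : ¬ (p.1 = σ q₁) := by
        intro h
        exact hq₁ (by rw [h]; exact (e.symm_apply_apply q₁).symm)
      simp only [hM, Matrix.of_apply, if_neg hne, zero_mul]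
  have key : ‖Matrix.toEuclideanCLM (n := Fin N × Fin km) (𝕜 := ℂ) M x‖ ^ 2 ≤ (C * ‖x‖) ^ 2 := by
    rw [normsq]
    calc ∑ p : Fin N × Fin km, ‖(Matrix.toEuclideanCLM (n := Fin N × Fin km) (𝕜 := ℂ) M x) p‖ ^ 2
        = ∑ p₁ : Fin N, ∑ a : Fin km,
            ‖(Matrix.toEuclideanCLM (n := Fin km) (𝕜 := ℂ) (B (e.symm p₁)) (y (e.symm p₁))) a‖ ^ 2 := by
          rw [Fintype.sum_prod_type]
          exact Finset.sum_congr rfl fun p₁ _ => Finset.sum_congr rfl fun a _ => by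
            rw [happ (p₁, a)]
      _ = ∑ p₁ : Fin N,
            ‖Matrix.toEuclideanCLM (n := Fin km) (𝕜 := ℂ) (B (e.symm p₁)) (y (e.symm p₁))‖ ^ 2 := by
          exact Finset.sum_congr rfl fun p₁ _ => (normsq _).symm
      _ ≤ ∑ p₁ : Fin N, (C * ‖y (e.symm p₁)‖) ^ 2 := by
          apply Finset.sum_le_sum
          intro p₁ _
          have h1 : ‖Matrix.toEuclideanCLM (n := Fin km) (𝕜 := ℂ) (B (e.symm p₁)) (y (e.symm p₁))‖
              ≤ C * ‖y (e.symm p₁)‖ := by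
            refine le_trans (ContinuousLinearMap.le_opNorm _ _) ?_
            exact mul_le_mul_of_nonneg_right (hB _) (norm_nonneg _)
          exact pow_le_pow_left₀ (norm_nonneg _) h1 2
      _ = ∑ i : Fin N, (C * ‖y i‖) ^ 2 := e.symm.sum_comp (fun i => (C * ‖y i‖) ^ 2)
      _ = C ^ 2 * ∑ i : Fin N, ‖y i‖ ^ 2 := by
          rw [Finset.mul_sum]; exact Finset.sum_congr rfl fun i _ => by ring
      _ = (C * ‖x‖) ^ 2 := by
          rw [mul_pow, normsq x, Fintype.sum_prod_type]
          congr 1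
          exact Finset.sum_congr rfl fun i _ => by rw [normsq (y i)]
  have h0 : (0:ℝ) ≤ C * ‖x‖ := mul_nonneg hC (norm_nonneg _)
  have := Real.sqrt_le_sqrt key
  rwa [Real.sqrt_sq (norm_nonneg _), Real.sqrt_sq h0] at this

section Main

variable {G : Type*} [Group G] {H : Subgroup G} {N : ℕ} {gr : Fin N → G}

lemma coset_facts (hgr : Function.Bijective fun i => (QuotientGroup.mk (gr i) : G ⧸ H))
    (j : G → Fin N → Fin N) (hf : G → Fin N → H)
    (hrel : ∀ (g : G) (i : Fin N), g * gr i = gr (j g i) * ((hf g i : G))) :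
    (∀ g, Function.Injective (j g)) ∧
    (∀ g g' i, j (g * g') i = j g (j g' i)) ∧
    (∀ g g' i, hf (g * g') i = hf g (j g' i) * hf g' i) := by
  have hmk : ∀ (g : G) (i : Fin N),
      (QuotientGroup.mk (g * gr i) : G ⧸ H) = QuotientGroup.mk (gr (j g i)) := by
    intro g i
    rw [hrel g i]
    exact QuotientGroup.mk_mul_of_mem _ (hf g i).2
  have hinj : ∀ g, Function.Injective (j g) := by
    intro g i₁ i₂ h
    apply hgr.injective
    have h1 := hmk g i₁
    have h2 := hmk g i₂
    rw [h] at h1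
    have : (QuotientGroup.mk (g * gr i₁) : G ⧸ H) = QuotientGroup.mk (g * gr i₂) := by
      rw [h1, h2]
    rw [QuotientGroup.eq] at this ⊢
    simpa [mul_assoc] using this
  have heq2 : ∀ g g' i, (g * g') * gr i = gr (j g (j g' i)) * ((hf g (j g' i) * hf g' i : H) : G) := by
    intro g g' i
    push_cast
    rw [mul_assoc, hrel g' i, ← mul_assoc, hrel g (j g' i), mul_assoc]
  have hj : ∀ g g' i, j (g * g') i = j g (j g' i) := by
    intro g g' i
    apply hgr.injective
    have h1 : (QuotientGroup.mk ((g * g') * gr i) : G ⧸ H) = QuotientGroup.mk (gr (j (g*g') i)) :=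
      hmk (g * g') i
    have h2 : (QuotientGroup.mk ((g * g') * gr i) : G ⧸ H) = QuotientGroup.mk (gr (j g (j g' i))) := by
      rw [heq2 g g' i]
      exact QuotientGroup.mk_mul_of_mem _ (hf g (j g' i) * hf g' i).2
    simp only
    rw [← h1, h2]
  refine ⟨hinj, hj, fun g g' i => ?_⟩
  have h1 := hrel (g * g') i
  rw [hj g g' i] at h1
  have h2 := heq2 g g' i
  rw [h1] at h2
  exact Subtype.ext (mul_left_cancel h2)

end Main

set_option maxHeartbeats 1000000 in
/-- If `H ≤ G` has finite index `N` (witnessed by coset representatives `gr`) and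
`π_n : H → U(k(n))` is an approximate homomorphism, then the induced maps
`Ind π_n : G → U(N·k(n))` form an approximate homomorphism of `G`, and the defect
`‖(Ind π_n)(gg') − (Ind π_n)(g)(Ind π_n)(g')‖` is bounded by the maximum over the
relevant elements `h', h ∈ H` of `‖π_n(h')π_n(h) − π_n(h'h)‖`. -/
theorem stmt15 {G : Type*} [Group G] (H : Subgroup G) (N : ℕ) (hN : 0 < N)
    (gr : Fin N → G)
    (hgr : Function.Bijective fun i => (QuotientGroup.mk (gr i) : G ⧸ H))
    (j : G → Fin N → Fin N) (hf : G → Fin N → H)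
    (hrel : ∀ (g : G) (i : Fin N), g * gr i = gr (j g i) * ((hf g i : G)))
    (k : ℕ → ℕ) (π : ∀ m : ℕ, H → Matrix (Fin (k m)) (Fin (k m)) ℂ)
    (hπu : ∀ (m : ℕ) (h : H), π m h ∈ Matrix.unitaryGroup (Fin (k m)) ℂ)
    (hπ : ∀ h₁ h₂ : H,
      Filter.Tendsto (fun m => opNorm (π m (h₁ * h₂) - π m h₁ * π m h₂))
        Filter.atTop (nhds 0)) :
    (∀ g g' : G, Filter.Tendsto (fun m =>
        opNorm (IndRep N (k m) (π m) j hf (g * g') -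
          IndRep N (k m) (π m) j hf g * IndRep N (k m) (π m) j hf g'))
      Filter.atTop (nhds 0)) ∧
    (∀ (g g' : G) (m : ℕ),
      opNorm (IndRep N (k m) (π m) j hf (g * g') -
        IndRep N (k m) (π m) j hf g * IndRep N (k m) (π m) j hf g') ≤
      Finset.univ.sup' ⟨⟨0, hN⟩, Finset.mem_univ _⟩ (fun i : Fin N =>
        opNorm (π m (hf g (j g' i)) * π m (hf g' i) -
          π m (hf g (j g' i) * hf g' i)))) := by
  obtain ⟨hinj, hj, hh⟩ := coset_facts hgr j hf hrel
  -- the difference matrix is a block matrix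
  have hD : ∀ (g g' : G) (m : ℕ),
      IndRep N (k m) (π m) j hf (g * g') -
        IndRep N (k m) (π m) j hf g * IndRep N (k m) (π m) j hf g' =
      Matrix.of (fun p q : Fin N × Fin (k m) =>
        if p.1 = j g (j g' q.1) then
          (π m (hf g (j g' q.1) * hf g' q.1) -
            π m (hf g (j g' q.1)) * π m (hf g' q.1)) p.2 q.2
        else 0) := by
    intro g g' m
    ext p q
    simp only [Matrix.sub_apply, Matrix.mul_apply, IndRep, Matrix.of_apply]
    rw [Fintype.sum_prod_type]
    rw [Finset.sum_eq_single (j g' q.1)]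
    · rw [hj g g' q.1, hh g g' q.1]
      by_cases hp : p.1 = j g (j g' q.1)
      · simp only [if_pos hp, if_pos rfl, if_true]
      · simp only [if_neg hp, if_pos rfl]
        simp
    · intro r₁ _ hr₁
      apply Finset.sum_eq_zero
      intro c _
      rw [if_neg hr₁, mul_zero]
    · intro h; exact absurd (Finset.mem_univ _) h
  -- the bound
  have part2 : ∀ (g g' : G) (m : ℕ),
      opNorm (IndRep N (k m) (π m) j hf (g * g') -
        IndRep N (k m) (π m) j hf g * IndRep N (k m) (π m) j hf g') ≤
      Finset.univ.sup' ⟨⟨0, hN⟩, Finset.mem_univ _⟩ (fun i : Fin N =>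
        opNorm (π m (hf g (j g' i)) * π m (hf g' i) -
          π m (hf g (j g' i) * hf g' i))) := by
    intro g g' m
    rw [hD g g' m]
    apply block_opNorm_le (fun i => j g (j g' i)) (fun _ _ h => hinj g' (hinj g h))
      (fun i => π m (hf g (j g' i) * hf g' i) - π m (hf g (j g' i)) * π m (hf g' i))
    · exact le_trans (opNorm_nonneg' _)
        (Finset.le_sup' (f := fun i : Fin N => opNorm (π m (hf g (j g' i)) * π m (hf g' i) -
          π m (hf g (j g' i) * hf g' i))) (Finset.mem_univ ⟨0, hN⟩))
    · intro i
      rw [opNorm_sub_comm]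
      exact Finset.le_sup' (f := fun i : Fin N => opNorm (π m (hf g (j g' i)) * π m (hf g' i) -
        π m (hf g (j g' i) * hf g' i))) (Finset.mem_univ i)
  refine ⟨fun g g' => ?_, part2⟩
  have hsum : Filter.Tendsto (fun m => ∑ i : Fin N, opNorm (π m (hf g (j g' i)) * π m (hf g' i) -
      π m (hf g (j g' i) * hf g' i))) Filter.atTop (nhds 0) := by
    have : Filter.Tendsto (fun m => ∑ i : Fin N, opNorm (π m (hf g (j g' i)) * π m (hf g' i) -
        π m (hf g (j g' i) * hf g' i))) Filter.atTop (nhds (∑ _i : Fin N, (0:ℝ))) := by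
      apply tendsto_finset_sum
      intro i _
      have := hπ (hf g (j g' i)) (hf g' i)
      refine this.congr (fun m => ?_)
      rw [opNorm_sub_comm]
    simpa using this
  have hle : ∀ m : ℕ, opNorm (IndRep N (k m) (π m) j hf (g * g') -
      IndRep N (k m) (π m) j hf g * IndRep N (k m) (π m) j hf g') ≤
      ∑ i : Fin N, opNorm (π m (hf g (j g' i)) * π m (hf g' i) -
        π m (hf g (j g' i) * hf g' i)) := by
    intro m
    refine le_trans (part2 g g' m) (Finset.sup'_le _ _ (fun i _ => ?_))
    exact Finset.single_le_sum (f := fun i : Fin N => opNorm (π m (hf g (j g' i)) * π m (hf g' i) -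
      π m (hf g (j g' i) * hf g' i))) (fun i' _ => opNorm_nonneg' _) (Finset.mem_univ i)
  exact squeeze_zero (fun m => opNorm_nonneg' _) hle hsum
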